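/- arXiv:1501.05070 — 2 statements merged into one kernel-verified Lean document; each statement's English description precedes it below -/
import Mathlib

section
/- For all x with 0 < |x| < π/2, one has (x/sin x)^2 + (π²/4 - 1)·(x/tan x) ≤ π²/4, with equality attained in the limit at x = 0 and at x = ±π/2. -/
open Real

lemma sin_ge_poly {x : ℝ} (hx : 0 ≤ x) : x - x^3/6 ≤ Real.sin x := by
  have hd : ∀ y : ℝ, HasDerivAt (fun y : ℝ => Real.sin y - (y - y^3/6))
      (Real.cos y - (1 - y^2/2)) y := by
    intro y
    have h2 : HasDerivAt (fun y : ℝ => y - y^3/6) (1 - 3*y^2/6) y := by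
      exact (hasDerivAt_id y).sub (((hasDerivAt_pow 3 y)).div_const 6)
    have := (Real.hasDerivAt_sin y).sub h2
    exact this.congr_deriv (by ring)
  have h : MonotoneOn (fun y : ℝ => Real.sin y - (y - y^3/6)) (Set.Ici 0) := by
    apply monotoneOn_of_deriv_nonneg (convex_Ici 0)
    · exact Continuous.continuousOn (by continuity)
    · intro y hy; exact (hd y).differentiableAt.differentiableWithinAt
    · intro y hy
      rw [(hd y).deriv]
      have := Real.one_sub_sq_div_two_le_cos (x := y)
      linarith
  have := h (Set.self_mem_Ici) (Set.mem_Ici.2 hx) hx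
  simp only [Real.sin_zero] at this
  norm_num at this
  linarith

lemma cos_le_poly {x : ℝ} (hx : 0 ≤ x) : Real.cos x ≤ 1 - x^2/2 + x^4/24 := by
  have hd : ∀ y : ℝ, HasDerivAt (fun y : ℝ => (1 - y^2/2 + y^4/24) - Real.cos y)
      (Real.sin y - (y - y^3/6)) y := by
    intro y
    have h2 : HasDerivAt (fun y : ℝ => 1 - y^2/2 + y^4/24) (-(2*y/2) + 4*y^3/24) y := by
      have := ((hasDerivAt_const y (1:ℝ)).sub ((hasDerivAt_pow 2 y).div_const 2)).add
        ((hasDerivAt_pow 4 y).div_const 24)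
      exact this.congr_deriv (by push_cast; ring)
    have := h2.sub (Real.hasDerivAt_cos y)
    exact this.congr_deriv (by ring)
  have h : MonotoneOn (fun y : ℝ => (1 - y^2/2 + y^4/24) - Real.cos y) (Set.Ici 0) := by
    apply monotoneOn_of_deriv_nonneg (convex_Ici 0)
    · exact Continuous.continuousOn (by continuity)
    · intro y hy; exact (hd y).differentiableAt.differentiableWithinAt
    · intro y hy
      rw [(hd y).deriv]
      rw [interior_Ici, Set.mem_Ioi] at hy
      have := sin_ge_poly hy.le
      linarith
  have := h (Set.self_mem_Ici) (Set.mem_Ici.2 hx) hx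
  simp only [Real.cos_zero] at this
  norm_num at this
  linarith

lemma sin_le_poly {x : ℝ} (hx : 0 ≤ x) : Real.sin x ≤ x - x^3/6 + x^5/120 := by
  have hd : ∀ y : ℝ, HasDerivAt (fun y : ℝ => (y - y^3/6 + y^5/120) - Real.sin y)
      ((1 - y^2/2 + y^4/24) - Real.cos y) y := by
    intro y
    have h2 : HasDerivAt (fun y : ℝ => y - y^3/6 + y^5/120) (1 - 3*y^2/6 + 5*y^4/120) y := by
      exact ((hasDerivAt_id y).sub ((hasDerivAt_pow 3 y).div_const 6)).add
        ((hasDerivAt_pow 5 y).div_const 120)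
    have := h2.sub (Real.hasDerivAt_sin y)
    exact this.congr_deriv (by ring)
  have h : MonotoneOn (fun y : ℝ => (y - y^3/6 + y^5/120) - Real.sin y) (Set.Ici 0) := by
    apply monotoneOn_of_deriv_nonneg (convex_Ici 0)
    · exact Continuous.continuousOn (by continuity)
    · intro y hy; exact (hd y).differentiableAt.differentiableWithinAt
    · intro y hy
      rw [(hd y).deriv]
      rw [interior_Ici, Set.mem_Ioi] at hy
      have := cos_le_poly hy.le
      linarith
  have := h (Set.self_mem_Ici) (Set.mem_Ici.2 hx) hx
  simp only [Real.sin_zero] at this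
  norm_num at this
  linarith



set_option maxHeartbeats 1000000 in
lemma key (x : ℝ) (hx0 : 0 < x) (hx1 : x < π/2) :
    x^2 + (π^2/4 - 1) * (x * Real.cos x) * Real.sin x ≤ π^2/4 * Real.sin x ^ 2 := by
  have hpi1 : π > 3.141592 := Real.pi_gt_d6
  have hpi2 : π < 3.141593 := Real.pi_lt_d6
  have ha : (2.4673 : ℝ) ≤ π^2/4 := by nlinarith
  have ha2 : π^2/4 ≤ (2.4675 : ℝ) := by nlinarith
  have hs0 : 0 < Real.sin x := Real.sin_pos_of_pos_of_lt_pi hx0 (by linarith)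
  have hc0 : 0 ≤ Real.cos x := Real.cos_nonneg_of_mem_Icc ⟨by linarith, hx1.le⟩
  rcases le_or_gt x (6/5) with hx2 | hx2
  · -- low region: Taylor bounds
    have hs1 : x - x^3/6 ≤ Real.sin x := sin_ge_poly hx0.le
    have hs2 : Real.sin x ≤ x - x^3/6 + x^5/120 := sin_le_poly hx0.le
    have hc1 : Real.cos x ≤ 1 - x^2/2 + x^4/24 := cos_le_poly hx0.le
    have hslo : 0 ≤ x - x^3/6 := by nlinarith
    have hsq : (x - x^3/6)^2 ≤ Real.sin x ^ 2 := by nlinarith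
    have hprod : x * Real.cos x * Real.sin x
        ≤ x * ((1 - x^2/2 + x^4/24) * (x - x^3/6 + x^5/120)) := by
      have h1 : Real.cos x * Real.sin x ≤ (1 - x^2/2 + x^4/24) * (x - x^3/6 + x^5/120) := by
        apply mul_le_mul hc1 hs2 hs0.le (by nlinarith)
      have h2 := mul_le_mul_of_nonneg_left h1 hx0.le
      rw [mul_assoc]
      exact h2
    have hu : x^2 ≤ 36/25 := by nlinarith
    have hA : 0 ≤ x^4 * (36/25 - x^2) := mul_nonneg (pow_nonneg hx0.le 4) (by linarith)
    have hB : 0 ≤ x^8 * (32 - x^2) :=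
      mul_nonneg (pow_nonneg hx0.le 8) (by nlinarith)
    have hC : 0 ≤ x^4 := pow_nonneg hx0.le 4
    have hT2 : 0 ≤ x^4 * (x^2 - 36/25)^2 * (445081/30000000 - (4891/9600000) * x^2) :=
      mul_nonneg (mul_nonneg hC (sq_nonneg _)) (by nlinarith)
    have hD : 0 ≤ (x - x^3/6)^2 - x * ((1 - x^2/2 + x^4/24) * (x - x^3/6 + x^5/120)) := by
      linarith [hA, hB, hC]
    have hR : x^2 + (2.4673 - 1) * (x * ((1 - x^2/2 + x^4/24) * (x - x^3/6 + x^5/120)))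
        ≤ 2.4673 * (x - x^3/6)^2 := by
      linarith [hA, hT2, hC]
    have h1 : (π^2/4 - 1) * (x * Real.cos x) * Real.sin x
        ≤ (π^2/4 - 1) * (x * ((1 - x^2/2 + x^4/24) * (x - x^3/6 + x^5/120))) := by
      have h2 := mul_le_mul_of_nonneg_left hprod (by linarith : (0:ℝ) ≤ π^2/4 - 1)
      linarith [h2]
    have h2 : π^2/4 * (x - x^3/6)^2 ≤ π^2/4 * Real.sin x ^ 2 :=
      mul_le_mul_of_nonneg_left hsq (by positivity)
    have h3 : 0 ≤ (π^2/4 - 2.4673) *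
        ((x - x^3/6)^2 - x * ((1 - x^2/2 + x^4/24) * (x - x^3/6 + x^5/120))) :=
      mul_nonneg (by linarith) hD
    linarith [h1, h2, h3, hR]
  · -- high region near π/2
    have ht : Real.cos x ≤ π/2 - x := by
      have := Real.sin_le (x := π/2 - x) (by linarith)
      rwa [Real.sin_pi_div_two_sub] at this
    have hs1 : 1 - (π/2 - x)^2/2 ≤ Real.sin x := by
      have := Real.one_sub_sq_div_two_le_cos (x := π/2 - x)
      rwa [Real.cos_pi_div_two_sub] at this
    have hs2 : Real.sin x ≤ 1 := Real.sin_le_one x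
    have ht0 : (0:ℝ) ≤ π/2 - x := by linarith
    have hs3 : (0:ℝ) ≤ 1 - (π/2 - x)^2/2 := by nlinarith
    have hsq : (1 - (π/2 - x)^2/2)^2 ≤ Real.sin x ^ 2 := by nlinarith
    have hprod : x * Real.cos x * Real.sin x ≤ x * (π/2 - x) := by
      have h1 : Real.cos x * Real.sin x ≤ π/2 - x := by nlinarith
      nlinarith [mul_le_mul_of_nonneg_left h1 hx0.le]
    have hb : 0 ≤ π * (3 - π^2/4)/2 - 2*(π/2 - x) := by nlinarith
    nlinarith [mul_le_mul_of_nonneg_left hsq (by linarith : (0:ℝ) ≤ π^2/4),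
      mul_le_mul_of_nonneg_left hprod (by linarith : (0:ℝ) ≤ π^2/4 - 1),
      mul_nonneg ht0 hb, sq_nonneg (π/2 - x),
      mul_nonneg (mul_nonneg (mul_nonneg ht0 ht0) (mul_nonneg ht0 ht0)) (by linarith : (0:ℝ) ≤ π^2/4)]

theorem stmt2 (x : ℝ) (h0 : 0 < |x|) (h1 : |x| < π / 2) :
    (x / Real.sin x) ^ 2 + (π ^ 2 / 4 - 1) * (x / Real.tan x) ≤ π ^ 2 / 4 := by
  wlog hx : 0 < x generalizing x
  · have hxneg : x < 0 := by
      rcases lt_trichotomy x 0 with h | h | h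
      · exact h
      · simp [h] at h0
      · exact absurd h hx
    have h2 := this (-x) (by simpa using h0) (by simpa using h1) (by linarith)
    have e1 : (-x) / Real.sin (-x) = x / Real.sin x := by
      rw [Real.sin_neg, neg_div_neg_eq]
    have e2 : (-x) / Real.tan (-x) = x / Real.tan x := by
      rw [Real.tan_neg, neg_div_neg_eq]
    rwa [e1, e2] at h2
  rw [abs_of_pos hx] at h1
  have hs : 0 < Real.sin x := Real.sin_pos_of_pos_of_lt_pi hx (by linarith [Real.pi_gt_three])
  have hc : 0 < Real.cos x := Real.cos_pos_of_mem_Ioo ⟨by linarith [Real.pi_gt_three], h1⟩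
  have hk := key x hx h1
  rw [Real.tan_eq_sin_div_cos]
  have e : (x / Real.sin x) ^ 2 + (π ^ 2 / 4 - 1) * (x / (Real.sin x / Real.cos x))
      = (x^2 + (π^2/4 - 1) * (x * Real.cos x) * Real.sin x) / Real.sin x ^ 2 := by
    field_simp
  rw [e, div_le_iff₀ (by positivity)]
  linarith [hk]
end

section
/- The function f(x) = (cos x − 1)/((sin x)/x − 1) is strictly decreasing on (0, π/2), with limit 3 as x → 0+ and limit π/(π−2) as x → π/2−. -/
open Real Set Filter Topology

noncomputable def f17 (x : ℝ) : ℝ := (Real.cos x - 1) / (Real.sin x / x - 1)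

private lemma aux_nonneg {F F' : ℝ → ℝ} (hd : ∀ y, HasDerivAt F (F' y) y) (h0 : F 0 = 0)
    (hF' : ∀ y, 0 ≤ y → 0 ≤ F' y) : ∀ x, 0 ≤ x → 0 ≤ F x := by
  intro x hx
  have hmono : MonotoneOn F (Ici 0) :=
    monotoneOn_of_deriv_nonneg (convex_Ici 0)
      (fun y _ => (hd y).continuousAt.continuousWithinAt)
      (fun y _ => (hd y).differentiableAt.differentiableWithinAt)
      (fun y hy => by
        rw [(hd y).deriv]
        rw [interior_Ici] at hy
        exact hF' y hy.le)
  simpa [h0] using hmono self_mem_Ici hx hx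

private lemma sin_ge_t3 {x : ℝ} (hx : 0 ≤ x) : x - x ^ 3 / 6 ≤ Real.sin x := by
  have := aux_nonneg (F := fun y => Real.sin y - (y - y ^ 3 / 6))
    (F' := fun y => Real.cos y - (1 - y ^ 2 / 2))
    (fun y => by
      have h : HasDerivAt (fun y : ℝ => y - y ^ 3 / 6) (1 - 3 * y ^ 2 / 6) y := by
        simpa using ((hasDerivAt_id y).fun_sub (((hasDerivAt_pow 3 y)).div_const 6))
      simpa [mul_comm] using (Real.hasDerivAt_sin y).fun_sub (h.congr_deriv (by ring)))
    (by simp)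
    (fun y hy => by have := Real.one_sub_sq_div_two_le_cos (x := y); linarith) x hx
  linarith

private lemma cos_le_t4 {x : ℝ} (hx : 0 ≤ x) : Real.cos x ≤ 1 - x ^ 2 / 2 + x ^ 4 / 24 := by
  have := aux_nonneg (F := fun y => 1 - y ^ 2 / 2 + y ^ 4 / 24 - Real.cos y)
    (F' := fun y => Real.sin y - (y - y ^ 3 / 6))
    (fun y => by
      have h1 : HasDerivAt (fun y : ℝ => 1 - y ^ 2 / 2 + y ^ 4 / 24)
          (-(2 * y / 2) + 4 * y ^ 3 / 24) y := by
        simpa using (((hasDerivAt_const y (1:ℝ)).fun_sub ((hasDerivAt_pow 2 y).div_const 2)).fun_add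
          ((hasDerivAt_pow 4 y).div_const 24))
      have := h1.fun_sub (Real.hasDerivAt_cos y)
      exact this.congr_deriv (by ring))
    (by simp)
    (fun y hy => by have := sin_ge_t3 hy; linarith) x hx
  linarith

private lemma sin_le_t5 {x : ℝ} (hx : 0 ≤ x) :
    Real.sin x ≤ x - x ^ 3 / 6 + x ^ 5 / 120 := by
  have := aux_nonneg (F := fun y => y - y ^ 3 / 6 + y ^ 5 / 120 - Real.sin y)
    (F' := fun y => 1 - y ^ 2 / 2 + y ^ 4 / 24 - Real.cos y)
    (fun y => by
      have h1 : HasDerivAt (fun y : ℝ => y - y ^ 3 / 6 + y ^ 5 / 120)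
          (1 - 3 * y ^ 2 / 6 + 5 * y ^ 4 / 120) y := by
        simpa using (((hasDerivAt_id y).fun_sub ((hasDerivAt_pow 3 y).div_const 6)).fun_add
          ((hasDerivAt_pow 5 y).div_const 120))
      have := h1.fun_sub (Real.hasDerivAt_sin y)
      exact this.congr_deriv (by ring))
    (by simp)
    (fun y hy => by have := cos_le_t4 hy; linarith) x hx
  linarith

private lemma cos_ge_t6 {x : ℝ} (hx : 0 ≤ x) :
    1 - x ^ 2 / 2 + x ^ 4 / 24 - x ^ 6 / 720 ≤ Real.cos x := by
  have := aux_nonneg (F := fun y => Real.cos y - (1 - y ^ 2 / 2 + y ^ 4 / 24 - y ^ 6 / 720))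
    (F' := fun y => y - y ^ 3 / 6 + y ^ 5 / 120 - Real.sin y)
    (fun y => by
      have h1 : HasDerivAt (fun y : ℝ => 1 - y ^ 2 / 2 + y ^ 4 / 24 - y ^ 6 / 720)
          (-(2 * y / 2) + 4 * y ^ 3 / 24 - 6 * y ^ 5 / 720) y := by
        simpa using ((((hasDerivAt_const y (1:ℝ)).fun_sub ((hasDerivAt_pow 2 y).div_const 2)).fun_add
          ((hasDerivAt_pow 4 y).div_const 24)).fun_sub ((hasDerivAt_pow 6 y).div_const 720))
      have := (Real.hasDerivAt_cos y).fun_sub h1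
      exact this.congr_deriv (by ring))
    (by simp)
    (fun y hy => by have := sin_le_t5 hy; linarith) x hx
  linarith

private lemma sin_ge_t7 {x : ℝ} (hx : 0 ≤ x) :
    x - x ^ 3 / 6 + x ^ 5 / 120 - x ^ 7 / 5040 ≤ Real.sin x := by
  have := aux_nonneg
    (F := fun y => Real.sin y - (y - y ^ 3 / 6 + y ^ 5 / 120 - y ^ 7 / 5040))
    (F' := fun y => Real.cos y - (1 - y ^ 2 / 2 + y ^ 4 / 24 - y ^ 6 / 720))
    (fun y => by
      have h1 : HasDerivAt (fun y : ℝ => y - y ^ 3 / 6 + y ^ 5 / 120 - y ^ 7 / 5040)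
          (1 - 3 * y ^ 2 / 6 + 5 * y ^ 4 / 120 - 7 * y ^ 6 / 5040) y := by
        simpa using ((((hasDerivAt_id y).fun_sub ((hasDerivAt_pow 3 y).div_const 6)).fun_add
          ((hasDerivAt_pow 5 y).div_const 120)).fun_sub ((hasDerivAt_pow 7 y).div_const 5040))
      have := (Real.hasDerivAt_sin y).fun_sub h1
      exact this.congr_deriv (by ring))
    (by simp)
    (fun y hy => by have := cos_ge_t6 hy; linarith) x hx
  linarith

private lemma cos_le_t8 {x : ℝ} (hx : 0 ≤ x) :
    Real.cos x ≤ 1 - x ^ 2 / 2 + x ^ 4 / 24 - x ^ 6 / 720 + x ^ 8 / 40320 := by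
  have := aux_nonneg
    (F := fun y => 1 - y ^ 2 / 2 + y ^ 4 / 24 - y ^ 6 / 720 + y ^ 8 / 40320 - Real.cos y)
    (F' := fun y => Real.sin y - (y - y ^ 3 / 6 + y ^ 5 / 120 - y ^ 7 / 5040))
    (fun y => by
      have h1 : HasDerivAt
          (fun y : ℝ => 1 - y ^ 2 / 2 + y ^ 4 / 24 - y ^ 6 / 720 + y ^ 8 / 40320)
          (-(2 * y / 2) + 4 * y ^ 3 / 24 - 6 * y ^ 5 / 720 + 8 * y ^ 7 / 40320) y := by
        simpa using (((((hasDerivAt_const y (1:ℝ)).fun_sub ((hasDerivAt_pow 2 y).div_const 2)).fun_add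
          ((hasDerivAt_pow 4 y).div_const 24)).fun_sub ((hasDerivAt_pow 6 y).div_const 720)).fun_add
          ((hasDerivAt_pow 8 y).div_const 40320))
      have := h1.fun_sub (Real.hasDerivAt_cos y)
      exact this.congr_deriv (by ring))
    (by simp)
    (fun y hy => by have := sin_ge_t7 hy; linarith) x hx
  linarith

set_option maxHeartbeats 1600000 in
/-- The key inequality: on `(0, π/2)`, `x² sin x < (1 - cos x)(sin x + x)`. -/
private lemma key_ineq {x : ℝ} (hx : 0 < x) (hx2 : x < π / 2) :
    x ^ 2 * Real.sin x < (1 - Real.cos x) * (Real.sin x + x) := by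
  have hxx : x ^ 2 ≤ 5 / 2 := by
    have hπ : π < 3.15 := by linarith [Real.pi_lt_d2]
    nlinarith
  have hu := sin_le_t5 hx.le
  have hl := sin_ge_t7 hx.le
  have hc := cos_le_t8 hx.le
  set s := Real.sin x
  set c := Real.cos x
  -- monomial comparisons
  have e2 : (0:ℝ) ≤ x ^ 2 := pow_nonneg hx.le 2
  have e4 : (0:ℝ) ≤ x ^ 4 := pow_nonneg hx.le 4
  have e5 : (0:ℝ) ≤ x ^ 5 := pow_nonneg hx.le 5
  have e6 : (0:ℝ) ≤ x ^ 6 := pow_nonneg hx.le 6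
  have e8 : (0:ℝ) ≤ x ^ 8 := pow_nonneg hx.le 8
  have m31 : x ^ 3 ≤ 5 / 2 * x := by nlinarith
  have m42 : x ^ 4 ≤ 5 / 2 * x ^ 2 := by nlinarith
  have m64 : x ^ 6 ≤ 5 / 2 * x ^ 4 := by nlinarith
  have m75 : x ^ 7 ≤ 5 / 2 * x ^ 5 := by nlinarith
  have m86 : x ^ 8 ≤ 5 / 2 * x ^ 6 := by nlinarith
  -- lower bounds for factors
  have hq : (0:ℝ) ≤ x ^ 2 / 2 - x ^ 4 / 24 + x ^ 6 / 720 - x ^ 8 / 40320 := by linarith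
  have hlpos : (0:ℝ) ≤ (x - x ^ 3 / 6 + x ^ 5 / 120 - x ^ 7 / 5040) + x := by linarith
  have h1 : x ^ 2 / 2 - x ^ 4 / 24 + x ^ 6 / 720 - x ^ 8 / 40320 ≤ 1 - c := by linarith
  have h2 : ((x - x ^ 3 / 6 + x ^ 5 / 120 - x ^ 7 / 5040) + x) ≤ s + x := by linarith
  have hprod : (x ^ 2 / 2 - x ^ 4 / 24 + x ^ 6 / 720 - x ^ 8 / 40320) *
      ((x - x ^ 3 / 6 + x ^ 5 / 120 - x ^ 7 / 5040) + x) ≤ (1 - c) * (s + x) :=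
    mul_le_mul h1 h2 hlpos (by linarith)
  have hub : x ^ 2 * s ≤ x ^ 2 * (x - x ^ 3 / 6 + x ^ 5 / 120) := by nlinarith [sq_nonneg x]
  have hgap : x ^ 2 * (x - x ^ 3 / 6 + x ^ 5 / 120) <
      (x ^ 2 / 2 - x ^ 4 / 24 + x ^ 6 / 720 - x ^ 8 / 40320) *
      ((x - x ^ 3 / 6 + x ^ 5 / 120 - x ^ 7 / 5040) + x) := by
    have hid : (x ^ 2 / 2 - x ^ 4 / 24 + x ^ 6 / 720 - x ^ 8 / 40320) *
        ((x - x ^ 3 / 6 + x ^ 5 / 120 - x ^ 7 / 5040) + x) -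
        x ^ 2 * (x - x ^ 3 / 6 + x ^ 5 / 120) =
        x ^ 7 * (1 / 180 - 11 / 15120 * x ^ 2 + 29 / 1209600 * x ^ 4 -
          1 / 2073600 * x ^ 6 + 1 / 203212800 * x ^ 8) := by ring
    have hx7 : 0 < x ^ 7 := pow_pos hx 7
    have hin : (0:ℝ) < 1 / 180 - 11 / 15120 * x ^ 2 + 29 / 1209600 * x ^ 4 -
        1 / 2073600 * x ^ 6 + 1 / 203212800 * x ^ 8 := by linarith
    have hp := mul_pos hx7 hin
    linarith [hid]
  linarith

theorem stmt17 :
    StrictAntiOn f17 (Ioo 0 (π / 2)) ∧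
    Filter.Tendsto f17 (nhdsWithin 0 (Ioi 0)) (nhds 3) ∧
    Filter.Tendsto f17 (nhdsWithin (π / 2) (Iio (π / 2))) (nhds (π / (π - 2))) := by
  refine ⟨?_, ?_, ?_⟩
  · -- strict antitonicity
    have hconv : Convex ℝ (Ioo (0:ℝ) (π/2)) := convex_Ioo _ _
    have hDne : ∀ x ∈ Ioo (0:ℝ) (π/2), Real.sin x / x - 1 ≠ 0 := by
      intro x hx
      have h1 : Real.sin x < x := Real.sin_lt hx.1
      have h2 : Real.sin x / x < 1 := (div_lt_one hx.1).mpr h1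
      linarith
    have hcont : ContinuousOn f17 (Ioo 0 (π/2)) := by
      apply ContinuousOn.div
      · exact (Real.continuous_cos.sub continuous_const).continuousOn
      · exact ((Real.continuous_sin.continuousOn).div continuous_id.continuousOn
          (fun x hx => ne_of_gt hx.1)).sub continuousOn_const
      · exact hDne
    refine strictAntiOn_of_deriv_neg hconv hcont ?_
    rw [interior_Ioo]
    intro x hx
    obtain ⟨hx1, hx2⟩ := hx
    have hxne : x ≠ 0 := ne_of_gt hx1
    have hD : Real.sin x / x - 1 ≠ 0 := hDne x ⟨hx1, hx2⟩
    have hden : HasDerivAt (fun y => Real.sin y / y - 1)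
        ((Real.cos x * x - Real.sin x * 1) / x ^ 2) x :=
      ((Real.hasDerivAt_sin x).div (hasDerivAt_id x) hxne).sub_const 1
    have hnum : HasDerivAt (fun y => Real.cos y - 1) (-Real.sin x) x :=
      (Real.hasDerivAt_cos x).sub_const 1
    have hf : HasDerivAt f17
        ((-Real.sin x * (Real.sin x / x - 1) -
          (Real.cos x - 1) * ((Real.cos x * x - Real.sin x * 1) / x ^ 2)) /
          (Real.sin x / x - 1) ^ 2) x := hnum.div hden hD
    rw [hf.deriv]
    apply div_neg_of_neg_of_pos
    · -- numerator is negative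
      set N := -Real.sin x * (Real.sin x / x - 1) -
          (Real.cos x - 1) * ((Real.cos x * x - Real.sin x * 1) / x ^ 2) with hN
      have hsc := Real.sin_sq_add_cos_sq x
      have hNx : x ^ 2 * N = x ^ 2 * Real.sin x - (1 - Real.cos x) * (Real.sin x + x) := by
        rw [hN]
        field_simp
        first
        | linear_combination x ^ 4 * hsc
        | linear_combination (-x) * hsc
      have hkey := key_ineq hx1 hx2
      have hx2pos : (0:ℝ) < x ^ 2 := by positivity
      nlinarith [hNx, hkey, hx2pos]
    · exact pow_two_pos_of_ne_zero hD
  · -- limit at 0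
    have hA : Tendsto (fun x : ℝ => (1 - Real.cos x) / x ^ 2) (𝓝[>] (0:ℝ)) (𝓝 (1/2)) := by
      have hg : Tendsto (fun x : ℝ => 1/2 - x ^ 2 / 24) (𝓝[>] (0:ℝ)) (𝓝 (1/2)) := by
        have hc : Continuous fun x : ℝ => 1/2 - x ^ 2 / 24 := by continuity
        simpa using (hc.tendsto 0).mono_left nhdsWithin_le_nhds
      have hh : Tendsto (fun _ : ℝ => (1:ℝ)/2) (𝓝[>] (0:ℝ)) (𝓝 (1/2)) := tendsto_const_nhds
      refine tendsto_of_tendsto_of_tendsto_of_le_of_le' hg hh ?_ ?_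
      · filter_upwards [self_mem_nhdsWithin] with x hx
        have hx : (0:ℝ) < x := hx
        have h4 := cos_le_t4 hx.le
        rw [le_div_iff₀ (by positivity : (0:ℝ) < x ^ 2)]
        nlinarith [h4, sq_nonneg x, sq_nonneg (x^2)]
      · filter_upwards [self_mem_nhdsWithin] with x hx
        have hx : (0:ℝ) < x := hx
        have h2 := Real.one_sub_sq_div_two_le_cos (x := x)
        rw [div_le_iff₀ (by positivity : (0:ℝ) < x ^ 2)]
        nlinarith [h2]
    have hB : Tendsto (fun x : ℝ => (x - Real.sin x) / x ^ 3) (𝓝[>] (0:ℝ)) (𝓝 (1/6)) := by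
      have hg : Tendsto (fun x : ℝ => 1/6 - x ^ 2 / 120) (𝓝[>] (0:ℝ)) (𝓝 (1/6)) := by
        have hc : Continuous fun x : ℝ => 1/6 - x ^ 2 / 120 := by continuity
        simpa using (hc.tendsto 0).mono_left nhdsWithin_le_nhds
      have hh : Tendsto (fun _ : ℝ => (1:ℝ)/6) (𝓝[>] (0:ℝ)) (𝓝 (1/6)) := tendsto_const_nhds
      refine tendsto_of_tendsto_of_tendsto_of_le_of_le' hg hh ?_ ?_
      · filter_upwards [self_mem_nhdsWithin] with x hx
        have hx : (0:ℝ) < x := hx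
        have h5 := sin_le_t5 hx.le
        rw [le_div_iff₀ (by positivity : (0:ℝ) < x ^ 3)]
        nlinarith [h5]
      · filter_upwards [self_mem_nhdsWithin] with x hx
        have hx : (0:ℝ) < x := hx
        have h3 := sin_ge_t3 hx.le
        rw [div_le_iff₀ (by positivity : (0:ℝ) < x ^ 3)]
        nlinarith [h3]
    have hq := hA.div hB (by norm_num : ((1:ℝ)/6) ≠ 0)
    have h3 : ((1:ℝ)/2) / ((1:ℝ)/6) = 3 := by norm_num
    rw [h3] at hq
    refine hq.congr' ?_
    filter_upwards [self_mem_nhdsWithin] with x hx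
    have hx : (0:ℝ) < x := hx
    have hs : Real.sin x < x := Real.sin_lt hx
    have hxne : x ≠ 0 := ne_of_gt hx
    have hne : x - Real.sin x ≠ 0 := by intro h; linarith [sub_pos.mpr hs]
    have hden : Real.sin x / x - 1 ≠ 0 := by
      have : Real.sin x / x < 1 := (div_lt_one hx).mpr hs
      linarith
    have hx3 : (x:ℝ) ^ 3 ≠ 0 := pow_ne_zero _ hxne
    have hB' : (x - Real.sin x) / x ^ 3 ≠ 0 := div_ne_zero hne hx3
    show (1 - Real.cos x) / x ^ 2 / ((x - Real.sin x) / x ^ 3) = f17 x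
    unfold f17
    rw [div_eq_div_iff hB' hden]
    field_simp
    ring
  · -- limit at π/2
    have hπ2 : (0:ℝ) < π / 2 := by positivity
    have hπne : π ≠ 2 := by
      intro h
      have := Real.pi_gt_three
      rw [h] at this; norm_num at this
    have hD : Real.sin (π/2) / (π/2) - 1 ≠ 0 := by
      rw [Real.sin_pi_div_two]
      have : (1:ℝ) / (π/2) = 2/π := by field_simp
      rw [this]
      have hπ3 : (3:ℝ) < π := Real.pi_gt_three
      have : 2/π < 1 := by
        rw [div_lt_one (by linarith)]
        linarith
      linarith
    have hcont : ContinuousAt f17 (π/2) := by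
      apply ContinuousAt.div
      · exact (Real.continuous_cos.sub continuous_const).continuousAt
      · exact ((Real.continuous_sin.continuousAt).div (continuousAt_id) (ne_of_gt hπ2)).sub
          continuousAt_const
      · exact hD
    have hval : f17 (π/2) = π / (π - 2) := by
      unfold f17
      rw [Real.sin_pi_div_two, Real.cos_pi_div_two]
      have hπ0 : π ≠ 0 := Real.pi_ne_zero
      have h1 : π - 2 ≠ 0 := by intro h; apply hπne; linarith
      have h2 : 2 - π ≠ 0 := by intro h; apply hπne; linarith
      field_simp
      ring
    rw [← hval]
    exact hcont.continuousWithinAt.tendsto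
end
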